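/- Let y_1, …, y_k ∈ ℝ^d, let ε > 0, and set δ = ε/2. Define the sequences α₀ = 3/4, α_{t+1} = (α_t/2)·(√(α_t² + 4) − α_t), and x⁽⁰⁾ = v⁽⁰⁾ = ȳ := (1/k)·Σ_{i=1}^k y_i, x⁽ᵗ⁺¹⁾ = v⁽ᵗ⁾ − δ·∇F_δ(v⁽ᵗ⁾), v⁽ᵗ⁺¹⁾ = x⁽ᵗ⁺¹⁾ + (α_t(1 − α_t)/(α_t² + α_{t+1}))·(x⁽ᵗ⁺¹⁾ − x⁽ᵗ⁾). If t satisfies (16/(9(t+1)²))·[ F_{ε/2}(ȳ) + (9/(4ε))·F_{ε/2}(ȳ)² ] < ε/2, then F(x⁽ᵗ⁾) − F(m̂) < ε, where m̂ is a minimizer of F. -/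

import Mathlib

open Finset

section aux
variable {E : Type*} [NormedAddCommGroup E] [InnerProductSpace ℝ E]

lemma charb_convex {δ : ℝ} (hδ : 0 < δ) (a b : E) :
    Real.sqrt (‖a‖ ^ 2 + δ ^ 2) + (inner ℝ ((Real.sqrt (‖a‖ ^ 2 + δ ^ 2))⁻¹ • a) (b - a) : ℝ)
      ≤ Real.sqrt (‖b‖ ^ 2 + δ ^ 2) := by
  set g := Real.sqrt (‖a‖ ^ 2 + δ ^ 2) with hgdef
  set h := Real.sqrt (‖b‖ ^ 2 + δ ^ 2) with hhdef
  have hg2 : g ^ 2 = ‖a‖ ^ 2 + δ ^ 2 := Real.sq_sqrt (by positivity)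
  have hh2 : h ^ 2 = ‖b‖ ^ 2 + δ ^ 2 := Real.sq_sqrt (by positivity)
  have hgpos : 0 < g := Real.sqrt_pos.mpr (by positivity)
  have hhpos : 0 < h := Real.sqrt_pos.mpr (by positivity)
  have hcs : (inner ℝ a b : ℝ) ≤ ‖a‖ * ‖b‖ := real_inner_le_norm a b
  have hkey : ‖a‖ * ‖b‖ + δ ^ 2 ≤ g * h := by
    nlinarith [sq_nonneg (‖a‖ - ‖b‖), mul_pos hgpos hhpos,
      norm_nonneg a, norm_nonneg b, sq_nonneg (‖a‖*‖b‖ + δ^2 - g*h)]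
  rw [real_inner_smul_left, inner_sub_right, real_inner_self_eq_norm_sq]
  have : g⁻¹ * ((inner ℝ a b : ℝ) - ‖a‖ ^ 2) ≤ h - g := by
    rw [inv_mul_le_iff₀ hgpos]
    nlinarith
  linarith

lemma charb_smooth {δ : ℝ} (hδ : 0 < δ) (a h : E) :
    Real.sqrt (‖a + h‖ ^ 2 + δ ^ 2)
      ≤ Real.sqrt (‖a‖ ^ 2 + δ ^ 2) + (Real.sqrt (‖a‖ ^ 2 + δ ^ 2))⁻¹ * (inner ℝ a h : ℝ)
        + ‖h‖ ^ 2 * (2 * δ)⁻¹ := by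
  have hd : ‖h‖ ^ 2 * (2 * δ)⁻¹ = ‖h‖ ^ 2 / (2 * δ) := by ring
  rw [hd]
  set g := Real.sqrt (‖a‖ ^ 2 + δ ^ 2) with hgdef
  set p := (inner ℝ a h : ℝ) with hpdef
  set q := ‖h‖ ^ 2 / (2 * δ) with hqdef
  have hg2 : g ^ 2 = ‖a‖ ^ 2 + δ ^ 2 := Real.sq_sqrt (by positivity)
  have hgpos : 0 < g := Real.sqrt_pos.mpr (by positivity)
  have hgδ : δ ≤ g := by nlinarith [norm_nonneg a]
  have hcs : |p| ≤ ‖a‖ * ‖h‖ := abs_real_inner_le_norm a h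
  have hna : ‖a‖ ≤ g := by nlinarith [norm_nonneg a]
  have hq2 : 2 * δ * q = ‖h‖ ^ 2 := by rw [hqdef]; field_simp
  have hqg : ‖h‖ ^ 2 ≤ 2 * g * q := by
    have hqn : 0 ≤ q := by positivity
    nlinarith
  have hsR : -‖h‖ ≤ g⁻¹ * p := by
    have h1 : g⁻¹ * (-(‖a‖ * ‖h‖)) ≤ g⁻¹ * p :=
      mul_le_mul_of_nonneg_left (neg_le_of_abs_le hcs) (by positivity)
    have h2 : g⁻¹ * (‖a‖ * ‖h‖) ≤ ‖h‖ := by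
      rw [inv_mul_le_iff₀ hgpos]
      nlinarith [norm_nonneg h]
    nlinarith
  set R := g + g⁻¹ * p + q with hRdef
  have hR0 : 0 ≤ R := by
    have hid : δ - ‖h‖ + q = (δ ^ 2 + (δ - ‖h‖) ^ 2) / (2 * δ) := by
      rw [hqdef]; field_simp; ring
    have h3 : 0 ≤ δ - ‖h‖ + q := by rw [hid]; positivity
    have : δ - ‖h‖ + q ≤ R := by rw [hRdef]; nlinarith
    linarith
  have hsq : ‖a + h‖ ^ 2 + δ ^ 2 ≤ R ^ 2 := by
    have hexp : ‖a + h‖ ^ 2 = ‖a‖ ^ 2 + 2 * p + ‖h‖ ^ 2 := norm_add_sq_real a h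
    have hgR : g * R = g ^ 2 + p + g * q := by
      rw [hRdef]; field_simp
    have id1 : (g ^ 2 + p + g * q) ^ 2 - g ^ 2 * (g ^ 2 + 2 * p + ‖h‖ ^ 2)
        = (p + g * q) ^ 2 + g ^ 2 * (2 * g * q - ‖h‖ ^ 2) := by ring
    have key : g ^ 2 * (‖a + h‖ ^ 2 + δ ^ 2) ≤ g ^ 2 * R ^ 2 := by
      have h4 : 0 ≤ (p + g * q) ^ 2 := sq_nonneg _
      have h5 : 0 ≤ g ^ 2 * (2 * g * q - ‖h‖ ^ 2) :=
        mul_nonneg (sq_nonneg g) (by linarith)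
      have h6 : g ^ 2 * R ^ 2 = (g * R) ^ 2 := by ring
      rw [h6, hgR, hexp]
      nlinarith [id1]
    exact le_of_mul_le_mul_left key (pow_pos hgpos 2)
  calc Real.sqrt (‖a + h‖ ^ 2 + δ ^ 2) ≤ Real.sqrt (R ^ 2) := Real.sqrt_le_sqrt hsq
    _ = R := Real.sqrt_sq hR0

end aux

section alpha
variable (α : ℕ → ℝ) (hα0 : α 0 = 3 / 4)
  (hα : ∀ t, α (t + 1) = (α t / 2) * (Real.sqrt ((α t) ^ 2 + 4) - α t))

include hα in
lemma alpha_rel : ∀ t, (α (t + 1)) ^ 2 = (1 - α (t + 1)) * (α t) ^ 2 := by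
  intro t
  have hs : (Real.sqrt ((α t) ^ 2 + 4)) ^ 2 = (α t) ^ 2 + 4 :=
    Real.sq_sqrt (by positivity)
  rw [hα t]
  linear_combination ((α t) ^ 2 / 4) * hs

include hα0 hα in
lemma alpha_pos : ∀ t, 0 < α t ∧ α t < 1 := by
  intro t
  induction t with
  | zero => rw [hα0]; norm_num
  | succ n ih =>
    obtain ⟨h0, h1⟩ := ih
    have hs : (Real.sqrt ((α n) ^ 2 + 4)) ^ 2 = (α n) ^ 2 + 4 :=
      Real.sq_sqrt (by positivity)
    have hsnn : 0 ≤ Real.sqrt ((α n) ^ 2 + 4) := Real.sqrt_nonneg _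
    have hgt : α n < Real.sqrt ((α n) ^ 2 + 4) := by nlinarith
    have hpos : 0 < α (n + 1) := by
      rw [hα n]; have : 0 < Real.sqrt ((α n)^2+4) - α n := by linarith
      positivity
    refine ⟨hpos, ?_⟩
    have hrel := alpha_rel α hα n
    nlinarith

include hα0 hα in
lemma alpha_le : ∀ t, α t ≤ 2 / ((t : ℝ) + 2) := by
  intro t
  induction t with
  | zero => rw [hα0]; norm_num
  | succ n ih =>
    obtain ⟨h0, h1⟩ := alpha_pos α hα0 hα n
    obtain ⟨h0', h1'⟩ := alpha_pos α hα0 hα (n + 1)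
    have hrel := alpha_rel α hα n
    set a := α n
    set β := α (n + 1)
    set b : ℝ := 2 / ((n : ℝ) + 3) with hbdef
    have hn2 : (0:ℝ) < (n : ℝ) + 2 := by positivity
    have hn3 : (0:ℝ) < (n : ℝ) + 3 := by positivity
    have hbpos : 0 < b := by positivity
    have h1b : (1 - b) * (2 / ((n : ℝ) + 2)) ^ 2 ≤ b ^ 2 := by
      rw [hbdef]
      rw [div_pow, div_pow, sub_div' (ne_of_gt hn3)]
      rw [div_mul_div_comm, div_le_div_iff₀ (by positivity) (by positivity)]
      ring_nf
      nlinarith [sq_nonneg ((n:ℝ))]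
    have ha2 : a ^ 2 ≤ (2 / ((n : ℝ) + 2)) ^ 2 := by
      have : (0:ℝ) ≤ a := le_of_lt h0
      nlinarith [ih]
    have h1bpos : 0 < 1 - b := by
      rw [hbdef]; rw [sub_pos, div_lt_one hn3]; linarith
    have hkey : (1 - b) * a ^ 2 ≤ b ^ 2 := by nlinarith
    have hb2 : β ≤ b := by nlinarith [sq_nonneg (β - b), sq_nonneg (β + b)]
    rw [hbdef] at hb2
    have hc2 : ((n + 1 : ℕ) : ℝ) + 2 = (n : ℝ) + 3 := by push_cast; ring
    rw [hc2]
    exact hb2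
end alpha

set_option maxHeartbeats 1000000 in
/-- **Guarantee for Algorithm 1 (accelerated gradient descent on the Charbonnier
relaxation)** (Theorem `thm:subopt0`). With `δ = ε/2`, `F(z) = (1/k) Σ ‖z − yⱼ‖`,
`F_δ(z) = (1/k) Σ √(‖z − yᵢ‖² + δ²)`, iterates as in Algorithm 1, if `t` satisfies
the termination condition `(16/(9(t+1)²))·(F_{ε/2}(ȳ) + (9/(4ε)) F_{ε/2}(ȳ)²) < ε/2`,
then `F(x⁽ᵗ⁾) − F(m̂) < ε` for any minimizer `m̂` of `F`. -/
theorem stmt14 {d k : ℕ} (hk : 0 < k)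
    (y : Fin k → EuclideanSpace ℝ (Fin d))
    (ε : ℝ) (hε : 0 < ε)
    (δ : ℝ) (hδ : δ = ε / 2)
    (F : EuclideanSpace ℝ (Fin d) → ℝ)
    (hF : ∀ z, F z = (k : ℝ)⁻¹ * ∑ j, ‖z - y j‖)
    (Fδ : EuclideanSpace ℝ (Fin d) → ℝ)
    (hFδ : ∀ z, Fδ z = (k : ℝ)⁻¹ * ∑ i, Real.sqrt (‖z - y i‖ ^ 2 + δ ^ 2))
    (gradFδ : EuclideanSpace ℝ (Fin d) → EuclideanSpace ℝ (Fin d))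
    (hgrad : ∀ z, gradFδ z =
      (k : ℝ)⁻¹ • ∑ i, (Real.sqrt (‖z - y i‖ ^ 2 + δ ^ 2))⁻¹ • (z - y i))
    (ybar : EuclideanSpace ℝ (Fin d)) (hybar : ybar = (k : ℝ)⁻¹ • ∑ i, y i)
    (α : ℕ → ℝ) (hα0 : α 0 = 3 / 4)
    (hα : ∀ t, α (t + 1) = (α t / 2) * (Real.sqrt ((α t) ^ 2 + 4) - α t))
    (x v : ℕ → EuclideanSpace ℝ (Fin d))
    (hx0 : x 0 = ybar) (hv0 : v 0 = ybar)
    (hxrec : ∀ t, x (t + 1) = v t - δ • gradFδ (v t))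
    (hvrec : ∀ t, v (t + 1) = x (t + 1) +
      ((α t * (1 - α t)) / ((α t) ^ 2 + α (t + 1))) • (x (t + 1) - x t))
    (mhat : EuclideanSpace ℝ (Fin d)) (hmhat : ∀ z, F mhat ≤ F z)
    (t : ℕ)
    (ht : (16 / (9 * ((t : ℝ) + 1) ^ 2)) * (Fδ ybar + (9 / (4 * ε)) * (Fδ ybar) ^ 2)
      < ε / 2) :
    F (x t) - F mhat < ε := by
  have hδpos : 0 < δ := by rw [hδ]; linarith
  have hk0 : (0:ℝ) < (k:ℝ) := by exact_mod_cast hk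
  have hkne : (k:ℝ) ≠ 0 := ne_of_gt hk0
  have hki : (0:ℝ) < (k:ℝ)⁻¹ := by positivity
  set D : ℝ := (2 * δ)⁻¹ with hDdef
  have hDpos : 0 < D := by positivity
  -- convexity of Fδ
  have hconv : ∀ w z, Fδ w + (inner ℝ (gradFδ w) (z - w) : ℝ) ≤ Fδ z := by
    intro w z
    rw [hFδ w, hFδ z, hgrad w, real_inner_smul_left, sum_inner]
    rw [← mul_add, ← Finset.sum_add_distrib]
    refine mul_le_mul_of_nonneg_left (Finset.sum_le_sum fun i _ => ?_) hki.le
    have hzw : z - w = (z - y i) - (w - y i) := by abel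
    rw [hzw]
    exact charb_convex hδpos (w - y i) (z - y i)
  -- smoothness of Fδ
  have hsmooth : ∀ w h, Fδ (w + h) ≤ Fδ w + (inner ℝ (gradFδ w) h : ℝ) + ‖h‖ ^ 2 * D := by
    intro w h
    rw [hFδ, hFδ, hgrad w, real_inner_smul_left, sum_inner]
    simp only [real_inner_smul_left]
    have hterm : ∀ i : Fin k, Real.sqrt (‖w + h - y i‖ ^ 2 + δ ^ 2)
        ≤ Real.sqrt (‖w - y i‖ ^ 2 + δ ^ 2)
          + (Real.sqrt (‖w - y i‖ ^ 2 + δ ^ 2))⁻¹ * (inner ℝ (w - y i) h : ℝ)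
          + ‖h‖ ^ 2 * (2 * δ)⁻¹ := by
      intro i
      have hrw : w + h - y i = (w - y i) + h := by abel
      rw [hrw]
      exact charb_smooth hδpos (w - y i) h
    calc (k:ℝ)⁻¹ * ∑ i, Real.sqrt (‖w + h - y i‖ ^ 2 + δ ^ 2)
        ≤ (k:ℝ)⁻¹ * ∑ i, (Real.sqrt (‖w - y i‖ ^ 2 + δ ^ 2)
            + (Real.sqrt (‖w - y i‖ ^ 2 + δ ^ 2))⁻¹ * (inner ℝ (w - y i) h : ℝ)
            + ‖h‖ ^ 2 * (2 * δ)⁻¹) :=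
          mul_le_mul_of_nonneg_left (Finset.sum_le_sum fun i _ => hterm i) hki.le
      _ = (k:ℝ)⁻¹ * ∑ i, Real.sqrt (‖w - y i‖ ^ 2 + δ ^ 2)
            + (k:ℝ)⁻¹ * ∑ i, (Real.sqrt (‖w - y i‖ ^ 2 + δ ^ 2))⁻¹ * (inner ℝ (w - y i) h : ℝ)
            + ‖h‖ ^ 2 * D := by
          rw [Finset.sum_add_distrib, Finset.sum_add_distrib, Finset.sum_const,
            card_univ, Fintype.card_fin, nsmul_eq_mul, hDdef]
          field_simp
  -- descent step
  have hdescent : ∀ w, Fδ (w - δ • gradFδ w) ≤ Fδ w - (δ / 2) * ‖gradFδ w‖ ^ 2 := by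
    intro w
    have h1 := hsmooth w (-(δ • gradFδ w))
    rw [← sub_eq_add_neg, inner_neg_right, real_inner_smul_right,
      real_inner_self_eq_norm_sq, norm_neg, norm_smul] at h1
    have h2 : (‖δ‖ * ‖gradFδ w‖) ^ 2 * D = (δ / 2) * ‖gradFδ w‖ ^ 2 := by
      rw [Real.norm_eq_abs, abs_of_pos hδpos, hDdef]
      field_simp
    rw [h2] at h1
    linarith
  have hαpos := alpha_pos α hα0 hα
  have hαrel := alpha_rel α hα
  have hαle := alpha_le α hα0 hα
  -- the auxiliary sequence u
  set u : ℕ → EuclideanSpace ℝ (Fin d) :=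
    fun s => (α s)⁻¹ • v s + (1 - (α s)⁻¹) • x s with hudef
  have hu : ∀ s, u s = (α s)⁻¹ • v s + (1 - (α s)⁻¹) • x s := fun s => rfl
  have hu0 : u 0 = ybar := by
    rw [hu 0, hx0, hv0, ← add_smul]
    have : (α 0)⁻¹ + (1 - (α 0)⁻¹) = 1 := by ring
    rw [this, one_smul]
  -- momentum coefficient identity
  have hc : ∀ s, (α s * (1 - α s)) / ((α s) ^ 2 + α (s + 1))
      = α (s + 1) * (1 - α s) / α s := by
    intro s
    obtain ⟨ha0, _⟩ := hαpos s
    obtain ⟨hb0, _⟩ := hαpos (s + 1)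
    have hden : (α s) ^ 2 + α (s + 1) ≠ 0 := by positivity
    have hrel := hαrel s
    field_simp
    nlinarith [hrel]
  have hustep : ∀ s, u (s + 1) = u s - ((α s)⁻¹ * δ) • gradFδ (v s) := by
    intro s
    obtain ⟨ha0, _⟩ := hαpos s
    obtain ⟨hb0, _⟩ := hαpos (s + 1)
    rw [hu (s + 1), hu s, hvrec s, hc s, hxrec s]
    match_scalars <;> (field_simp; try ring)
  -- one-step inequality
  have hstep : ∀ s, Fδ (x (s + 1)) - Fδ mhat
      ≤ (1 - α s) * (Fδ (x s) - Fδ mhat)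
        + (α s) ^ 2 * D * (‖u s - mhat‖ ^ 2 - ‖u (s + 1) - mhat‖ ^ 2) := by
    intro s
    obtain ⟨ha0, ha1⟩ := hαpos s
    set g := gradFδ (v s) with hgdef
    have h1 : Fδ (x (s + 1)) ≤ Fδ (v s) - (δ / 2) * ‖g‖ ^ 2 := by
      rw [hxrec s]; exact hdescent (v s)
    have h2 : Fδ (v s) ≤ Fδ (x s) + (inner ℝ g (v s - x s) : ℝ) := by
      have := hconv (v s) (x s)
      have hxv : (inner ℝ g (x s - v s) : ℝ) = -(inner ℝ g (v s - x s) : ℝ) := by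
        rw [← neg_sub, inner_neg_right]
      linarith [this, hxv.le, hxv.ge]
    have h3 : Fδ (v s) ≤ Fδ mhat + (inner ℝ g (v s - mhat) : ℝ) := by
      have := hconv (v s) mhat
      have hxv : (inner ℝ g (mhat - v s) : ℝ) = -(inner ℝ g (v s - mhat) : ℝ) := by
        rw [← neg_sub, inner_neg_right]
      linarith [this, hxv.le, hxv.ge]
    have h4 : (1 - α s) • (v s - x s) + α s • (v s - mhat) = α s • (u s - mhat) := by
      rw [hu s]
      match_scalars <;> (field_simp; try ring)
    have h5 : (1 - α s) * (inner ℝ g (v s - x s) : ℝ) + α s * (inner ℝ g (v s - mhat) : ℝ)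
        = α s * (inner ℝ g (u s - mhat) : ℝ) := by
      rw [← real_inner_smul_right, ← real_inner_smul_right, ← inner_add_right, h4,
        real_inner_smul_right]
    have h7 : α s * (inner ℝ g (u s - mhat) : ℝ) - (δ / 2) * ‖g‖ ^ 2
        = (α s) ^ 2 * D * (‖u s - mhat‖ ^ 2 - ‖u (s + 1) - mhat‖ ^ 2) := by
      have hu1 : u (s + 1) - mhat = (u s - mhat) - ((α s)⁻¹ * δ) • g := by
        rw [hustep s, sub_right_comm]
      have hexp : ‖u (s + 1) - mhat‖ ^ 2
          = ‖u s - mhat‖ ^ 2 - 2 * (((α s)⁻¹ * δ) * (inner ℝ g (u s - mhat) : ℝ))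
            + ((α s)⁻¹ * δ) ^ 2 * ‖g‖ ^ 2 := by
        rw [hu1, norm_sub_sq_real (u s - mhat) (((α s)⁻¹ * δ) • g),
          real_inner_smul_right, norm_smul, Real.norm_eq_abs,
          abs_of_pos (by positivity : (0:ℝ) < (α s)⁻¹ * δ),
          real_inner_comm (u s - mhat) g, mul_pow]
      rw [hexp, hDdef]
      field_simp
      ring
    have h2' := mul_le_mul_of_nonneg_left h2 (by linarith : (0:ℝ) ≤ 1 - α s)
    have h3' := mul_le_mul_of_nonneg_left h3 ha0.le
    nlinarith [h1, h2', h3', h5, h7]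
  -- main induction
  have hmain : ∀ s, Fδ (x (s + 1)) - Fδ mhat + (α s) ^ 2 * D * ‖u (s + 1) - mhat‖ ^ 2
      ≤ (α s) ^ 2 * ((4 / 9) * (Fδ (x 0) - Fδ mhat) + D * ‖u 0 - mhat‖ ^ 2) := by
    intro s
    induction s with
    | zero =>
      have h := hstep 0
      rw [hα0] at h ⊢
      nlinarith [h]
    | succ n ih =>
      have h := hstep (n + 1)
      have hrel := hαrel n
      obtain ⟨hb0, hb1⟩ := hαpos (n + 1)
      calc Fδ (x (n + 2)) - Fδ mhat + (α (n + 1)) ^ 2 * D * ‖u (n + 2) - mhat‖ ^ 2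
          ≤ (1 - α (n + 1)) * (Fδ (x (n + 1)) - Fδ mhat)
            + (α (n + 1)) ^ 2 * D * ‖u (n + 1) - mhat‖ ^ 2 := by linarith [h]
        _ = (1 - α (n + 1)) * ((Fδ (x (n + 1)) - Fδ mhat)
            + (α n) ^ 2 * D * ‖u (n + 1) - mhat‖ ^ 2) := by
            linear_combination (D * ‖u (n + 1) - mhat‖ ^ 2) * hrel
        _ ≤ (1 - α (n + 1)) * ((α n) ^ 2 * ((4 / 9) * (Fδ (x 0) - Fδ mhat)
            + D * ‖u 0 - mhat‖ ^ 2)) :=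
            mul_le_mul_of_nonneg_left ih (by linarith)
        _ = (α (n + 1)) ^ 2 * ((4 / 9) * (Fδ (x 0) - Fδ mhat) + D * ‖u 0 - mhat‖ ^ 2) := by
            linear_combination (((4 / 9) * (Fδ (x 0) - Fδ mhat) + D * ‖u 0 - mhat‖ ^ 2)) * hrel.symm
  -- basic facts about F and Fδ
  have hFδ_nonneg : ∀ z, 0 ≤ Fδ z := by
    intro z
    rw [hFδ]
    exact mul_nonneg hki.le (Finset.sum_nonneg fun i _ => Real.sqrt_nonneg _)
  have hF_le_Fδ : ∀ z, F z ≤ Fδ z := by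
    intro z
    rw [hF, hFδ]
    refine mul_le_mul_of_nonneg_left (Finset.sum_le_sum fun i _ => ?_) hki.le
    rw [show ‖z - y i‖ = Real.sqrt (‖z - y i‖ ^ 2) from (Real.sqrt_sq (norm_nonneg _)).symm]
    exact Real.sqrt_le_sqrt (by nlinarith [sq_nonneg δ, Real.sq_sqrt (sq_nonneg ‖z - y i‖)])
  have hFδ_le : ∀ z, Fδ z ≤ F z + δ := by
    intro z
    rw [hF, hFδ]
    have hterm : ∀ i : Fin k, Real.sqrt (‖z - y i‖ ^ 2 + δ ^ 2) ≤ ‖z - y i‖ + δ := by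
      intro i
      have h1 : ‖z - y i‖ ^ 2 + δ ^ 2 ≤ (‖z - y i‖ + δ) ^ 2 := by
        nlinarith [norm_nonneg (z - y i), hδpos.le]
      calc Real.sqrt (‖z - y i‖ ^ 2 + δ ^ 2) ≤ Real.sqrt ((‖z - y i‖ + δ) ^ 2) :=
            Real.sqrt_le_sqrt h1
        _ = ‖z - y i‖ + δ := Real.sqrt_sq (by positivity)
    calc (k:ℝ)⁻¹ * ∑ i, Real.sqrt (‖z - y i‖ ^ 2 + δ ^ 2)
        ≤ (k:ℝ)⁻¹ * ∑ i, (‖z - y i‖ + δ) :=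
          mul_le_mul_of_nonneg_left (Finset.sum_le_sum fun i _ => hterm i) hki.le
      _ = (k:ℝ)⁻¹ * ∑ i, ‖z - y i‖ + δ := by
          rw [Finset.sum_add_distrib, Finset.sum_const, card_univ, Fintype.card_fin,
            nsmul_eq_mul]
          field_simp
  have hW : δ ≤ Fδ ybar := by
    rw [hFδ]
    have hterm : ∀ i : Fin k, δ ≤ Real.sqrt (‖ybar - y i‖ ^ 2 + δ ^ 2) := by
      intro i
      rw [show δ = Real.sqrt (δ ^ 2) from (Real.sqrt_sq hδpos.le).symm]
      refine Real.sqrt_le_sqrt ?_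
      rw [Real.sq_sqrt (sq_nonneg δ)]
      nlinarith [sq_nonneg ‖ybar - y i‖]
    calc δ = (k:ℝ)⁻¹ * ∑ _i : Fin k, δ := by
          rw [Finset.sum_const, card_univ, Fintype.card_fin, nsmul_eq_mul]
          field_simp
      _ ≤ (k:ℝ)⁻¹ * ∑ i, Real.sqrt (‖ybar - y i‖ ^ 2 + δ ^ 2) :=
          mul_le_mul_of_nonneg_left (Finset.sum_le_sum fun i _ => hterm i) hki.le
  have hnorm : ‖ybar - mhat‖ ≤ Fδ ybar := by
    have h1 : ‖ybar - mhat‖ ≤ F mhat := by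
      have hrw : ybar - mhat = (k:ℝ)⁻¹ • ∑ i, (y i - mhat) := by
        rw [hybar, Finset.sum_sub_distrib, smul_sub, Finset.sum_const, card_univ,
          Fintype.card_fin, ← Nat.cast_smul_eq_nsmul ℝ, smul_smul,
          inv_mul_cancel₀ hkne, one_smul]
      rw [hrw, hF, norm_smul, Real.norm_eq_abs, abs_of_pos hki]
      refine mul_le_mul_of_nonneg_left ?_ hki.le
      calc ‖∑ i, (y i - mhat)‖ ≤ ∑ i, ‖y i - mhat‖ := norm_sum_le _ _
        _ = ∑ i, ‖mhat - y i‖ := by simp [norm_sub_rev]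
    exact h1.trans ((hmhat ybar).trans (hF_le_Fδ ybar))
  -- final assembly
  obtain rfl | ⟨s, rfl⟩ : t = 0 ∨ ∃ s, t = s + 1 := by
    cases t with
    | zero => exact Or.inl rfl
    | succ n => exact Or.inr ⟨n, rfl⟩
  · -- t = 0 : contradiction with ht
    exfalso
    have hh : (9 / (4 * ε)) * (Fδ ybar) ^ 2 ≥ 0 :=
      mul_nonneg (by positivity) (sq_nonneg _)
    have h0 : ((0:ℕ):ℝ) = 0 := by norm_num
    rw [h0] at ht
    norm_num at ht
    nlinarith [hW, hδpos, hδ]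
  · -- t = s + 1
    have h9 := hmain s
    have hdrop : 0 ≤ (α s) ^ 2 * D * ‖u (s + 1) - mhat‖ ^ 2 := by positivity
    have hE : Fδ (x (s + 1)) - Fδ mhat
        ≤ (α s) ^ 2 * ((4 / 9) * (Fδ ybar) + D * (Fδ ybar) ^ 2) := by
      have hE0 : Fδ (x 0) - Fδ mhat ≤ Fδ ybar := by
        rw [hx0]; linarith [hFδ_nonneg mhat]
      have hn2 : ‖u 0 - mhat‖ ^ 2 ≤ (Fδ ybar) ^ 2 := by
        rw [hu0]
        exact pow_le_pow_left₀ (norm_nonneg _) hnorm 2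
      have hmono : (4 / 9) * (Fδ (x 0) - Fδ mhat) + D * ‖u 0 - mhat‖ ^ 2
          ≤ (4 / 9) * (Fδ ybar) + D * (Fδ ybar) ^ 2 := by
        have := mul_le_mul_of_nonneg_left hn2 hDpos.le
        linarith
      calc Fδ (x (s + 1)) - Fδ mhat
          ≤ (α s) ^ 2 * ((4 / 9) * (Fδ (x 0) - Fδ mhat) + D * ‖u 0 - mhat‖ ^ 2) := by
            linarith [h9, hdrop]
        _ ≤ (α s) ^ 2 * ((4 / 9) * (Fδ ybar) + D * (Fδ ybar) ^ 2) :=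
            mul_le_mul_of_nonneg_left hmono (sq_nonneg _)
    have hWpos : 0 < Fδ ybar := lt_of_lt_of_le hδpos hW
    have hαb : (α s) ^ 2 ≤ 4 / ((s:ℝ) + 2) ^ 2 := by
      have h1 := hαle s
      have h2 : (0:ℝ) < (s:ℝ) + 2 := by positivity
      have h3 : (0:ℝ) ≤ α s := (hαpos s).1.le
      calc (α s) ^ 2 ≤ (2 / ((s:ℝ) + 2)) ^ 2 := pow_le_pow_left₀ h3 h1 2
        _ = 4 / ((s:ℝ) + 2) ^ 2 := by rw [div_pow]; norm_num
    have hCpos : 0 ≤ (4 / 9) * (Fδ ybar) + D * (Fδ ybar) ^ 2 := by positivity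
    have hE2 : Fδ (x (s + 1)) - Fδ mhat
        ≤ (4 / ((s:ℝ) + 2) ^ 2) * ((4 / 9) * (Fδ ybar) + D * (Fδ ybar) ^ 2) :=
      hE.trans (mul_le_mul_of_nonneg_right hαb hCpos)
    have hEq : (4 / ((s:ℝ) + 2) ^ 2) * ((4 / 9) * (Fδ ybar) + D * (Fδ ybar) ^ 2)
        = (16 / (9 * (((s:ℕ):ℝ) + 1 + 1) ^ 2)) * (Fδ ybar + (9 / (4 * ε)) * (Fδ ybar) ^ 2) := by
      have hs2 : ((s:ℝ) + 2) ≠ 0 := by positivity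
      rw [hDdef, hδ]
      have : ((s:ℕ):ℝ) + 1 + 1 = (s:ℝ) + 2 := by push_cast; ring
      rw [this]
      field_simp
      ring
    have hcast : ((s + 1 : ℕ) : ℝ) + 1 = ((s:ℕ):ℝ) + 1 + 1 := by push_cast; ring
    rw [hcast] at ht
    have hFinal : Fδ (x (s + 1)) - Fδ mhat < ε / 2 := by
      rw [hEq] at hE2
      linarith
    have h10 := hF_le_Fδ (x (s + 1))
    have h11 := hFδ_le mhat
    rw [hδ] at h11
    linarith
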